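/- For any bipartite base-pair-sum energy model M and any energy distance Δ > 0: if a sequence w is a Δ-design for a structure S, then for every integer k ≥ 1, the k-stutter w^[k] is a Δ-design for the k-stutter S^[k]. -/

import Mathlib

open scoped Classical

/-- An RNA nucleotide. -/
inductive Base | A | U | C | G
deriving DecidableEq, Inhabited, Repr

/-- The Watson-Crick pairing relation (only G-C and A-U pairs allowed). -/
def wcPair : Base → Base → Prop
  | .G, .C => True | .C, .G => True
  | .A, .U => True | .U, .A => True
  | _, _ => False

/-- The Nussinov-Jacobson pairing relation (G-C, A-U and G-U pairs allowed). -/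
def njPair : Base → Base → Prop
  | .G, .C => True | .C, .G => True
  | .A, .U => True | .U, .A => True
  | .G, .U => True | .U, .G => True
  | _, _ => False

/-- An RNA (pseudoknot-free) secondary structure, 0-indexed positions. -/
structure SecStr where
  len : ℕ
  pairs : Finset (ℕ × ℕ)
  lt : ∀ p ∈ pairs, p.1 < p.2
  ub : ∀ p ∈ pairs, p.2 < len
  once : ∀ p ∈ pairs, ∀ q ∈ pairs, p ≠ q →
    p.1 ≠ q.1 ∧ p.1 ≠ q.2 ∧ p.2 ≠ q.1 ∧ p.2 ≠ q.2
  noncross : ∀ p ∈ pairs, ∀ q ∈ pairs,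
    ¬ (p.1 < q.1 ∧ q.1 < p.2 ∧ p.2 < q.2)

def SecStr.pairedAt (S : SecStr) (i : ℕ) : Prop := ∃ p ∈ S.pairs, p.1 = i ∨ p.2 = i
def SecStr.unpairedAt (S : SecStr) (i : ℕ) : Prop := i < S.len ∧ ¬ S.pairedAt i
def SecStr.saturated (S : SecStr) : Prop := ∀ i < S.len, S.pairedAt i

/-- A structure is compatible with a sequence `w` (w.r.t. pairing relation `R`)
if it has the right length and all base pairs are `R`-valid. -/
def compat {α : Type*} [Inhabited α] (R : α → α → Prop) (w : List α) (S : SecStr) : Prop :=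
  S.len = w.length ∧ ∀ p ∈ S.pairs, R (w.getD p.1 default) (w.getD p.2 default)

/-- Base-pair-sum free energy of a structure on a sequence. -/
noncomputable def energy {α : Type*} [Inhabited α] (E : α → α → ℝ) (w : List α)
    (S : SecStr) : ℝ :=
  ∑ p ∈ S.pairs, E (w.getD p.1 default) (w.getD p.2 default)

/-- `w` is a Δ-design for `S`: `S` is compatible with `w`, and every other
compatible structure has energy at least `energy E w S + Δ`. -/
def isDesign {α : Type*} [Inhabited α] (R : α → α → Prop) (E : α → α → ℝ) (Δ : ℝ)
    (w : List α) (S : SecStr) : Prop :=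
  compat R w S ∧ ∀ S' : SecStr, compat R w S' → S' ≠ S →
    energy E w S' ≥ energy E w S + Δ

/- Tree representation machinery. -/
def encloses (q p : ℕ × ℕ) : Prop := q.1 < p.1 ∧ p.2 < q.2
def SecStr.hasParent (S : SecStr) (p : ℕ × ℕ) : Prop := ∃ q ∈ S.pairs, encloses q p
def SecStr.isParentOf (S : SecStr) (q p : ℕ × ℕ) : Prop :=
  q ∈ S.pairs ∧ p ∈ S.pairs ∧ encloses q p ∧ ¬ ∃ m ∈ S.pairs, encloses q m ∧ encloses m p

/-- Degree of a paired node: number of paired children plus one for the parent (if any). -/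
noncomputable def SecStr.pairDeg (S : SecStr) (p : ℕ × ℕ) : ℕ :=
  (S.pairs.filter (fun c => S.isParentOf p c)).card + (if S.hasParent p then 1 else 0)
/-- Degree of the virtual root: number of top-level base pairs. -/
noncomputable def SecStr.rootDeg (S : SecStr) : ℕ :=
  (S.pairs.filter (fun p => ¬ S.hasParent p)).card
/-- All nodes of the tree representation (including the virtual root) have degree ≤ d. -/
def SecStr.degLE (S : SecStr) (d : ℕ) : Prop :=
  S.rootDeg ≤ d ∧ ∀ p ∈ S.pairs, S.pairDeg p ≤ d

/-- A sequence is saturable if a saturated structure is compatible with it. -/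
def saturable {α : Type*} [Inhabited α] (R : α → α → Prop) (w : List α) : Prop :=
  ∃ S : SecStr, compat R w S ∧ S.saturated
/-- Atomic saturable: saturable, and no (nonempty) proper prefix is saturable. -/
def atomicSaturable {α : Type*} [Inhabited α] (R : α → α → Prop) (w : List α) : Prop :=
  saturable R w ∧ ∀ k, 0 < k → k < w.length → ¬ saturable R (w.take k)

/- Motifs. -/
def SecStr.unpChildOfPair (S : SecStr) (q : ℕ × ℕ) (u : ℕ) : Prop :=
  S.unpairedAt u ∧ q.1 < u ∧ u < q.2 ∧
    ¬ ∃ m ∈ S.pairs, q.1 < m.1 ∧ m.1 < u ∧ u < m.2 ∧ m.2 < q.2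
def SecStr.unpChildOfRoot (S : SecStr) (u : ℕ) : Prop :=
  S.unpairedAt u ∧ ¬ ∃ m ∈ S.pairs, m.1 < u ∧ u < m.2
/-- Motif m₅ : a tree node (possibly the root) of degree greater than four. -/
def hasM5 (S : SecStr) : Prop := 4 < S.rootDeg ∨ ∃ p ∈ S.pairs, 4 < S.pairDeg p
/-- Motif m₃∘ : a node with an unpaired child and degree greater than two. -/
def hasM3o (S : SecStr) : Prop :=
  (∃ q ∈ S.pairs, (∃ u, S.unpChildOfPair q u) ∧ 2 < S.pairDeg q) ∨
  ((∃ u, S.unpChildOfRoot u) ∧ 2 < S.rootDeg)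

/- Colorings of the tree representation. -/
inductive Col | black | white | gray
deriving DecidableEq

noncomputable def childCount (S : SecStr) (col : ℕ × ℕ → Col) (q : ℕ × ℕ) (c : Col) : ℕ :=
  (S.pairs.filter (fun p => S.isParentOf q p ∧ col p = c)).card
noncomputable def rootChildCount (S : SecStr) (col : ℕ × ℕ → Col) (c : Col) : ℕ :=
  (S.pairs.filter (fun p => ¬ S.hasParent p ∧ col p = c)).card

/-- A proper coloring of the tree representation. -/
def properCol (S : SecStr) (col : ℕ × ℕ → Col) : Prop :=
  rootChildCount S col .black ≤ 1 ∧ rootChildCount S col .white ≤ 1 ∧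
  rootChildCount S col .gray ≤ 2 ∧
  ∀ q ∈ S.pairs,
    childCount S col q .black ≤ 1 ∧ childCount S col q .white ≤ 1 ∧
    childCount S col q .gray ≤ 2 ∧
    childCount S col q (col q) ≤ 1 ∧
    (col q = .black → ∀ p ∈ S.pairs, S.isParentOf q p → col p ≠ .white) ∧
    (col q = .white → ∀ p ∈ S.pairs, S.isParentOf q p → col p ≠ .black)

/-- Level of a paired node: #black minus #white on the path to the root (incl. itself). -/
noncomputable def pairLvl (S : SecStr) (col : ℕ × ℕ → Col) (p : ℕ × ℕ) : ℤ :=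
  ((S.pairs.filter (fun q => q.1 ≤ p.1 ∧ p.2 ≤ q.2 ∧ col q = .black)).card : ℤ) -
  ((S.pairs.filter (fun q => q.1 ≤ p.1 ∧ p.2 ≤ q.2 ∧ col q = .white)).card : ℤ)
/-- Level of an unpaired node. -/
noncomputable def unpLvl (S : SecStr) (col : ℕ × ℕ → Col) (u : ℕ) : ℤ :=
  ((S.pairs.filter (fun q => q.1 < u ∧ u < q.2 ∧ col q = .black)).card : ℤ) -
  ((S.pairs.filter (fun q => q.1 < u ∧ u < q.2 ∧ col q = .white)).card : ℤ)

/-- Separated coloring: gray-node levels and unpaired-node levels are disjoint. -/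
def separatedCol (S : SecStr) (col : ℕ × ℕ → Col) : Prop :=
  ∀ p ∈ S.pairs, col p = .gray → ∀ u, S.unpairedAt u →
    pairLvl S col p ≠ unpLvl S col u

/-- A bipartite energy model: its compatibility graph is bipartite. -/
def Bipartite {α : Type*} (R : α → α → Prop) : Prop :=
  ∃ f : α → Bool, ∀ a b, R a b → f a ≠ f b

/-- The k-stutter of a sequence. -/
def stutterSeq {α : Type*} (w : List α) (k : ℕ) : List α :=
  w.flatMap (fun a => List.replicate k a)
/-- The base pairs of the k-stutter of a structure. -/
def stutterPairs (S : SecStr) (k : ℕ) : Finset (ℕ × ℕ) :=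
  S.pairs.biUnion (fun p => (Finset.range k).image
    (fun m => (k * p.1 + m, k * p.2 + (k - 1 - m))))

/-- Two base pairs belong to the same band (maximal stack) of S. -/
def sameBand (S : SecStr) (p p' : ℕ × ℕ) : Prop :=
  p ∈ S.pairs ∧ p' ∈ S.pairs ∧ p.1 + p.2 = p'.1 + p'.2 ∧
  ∀ x, min p.1 p'.1 ≤ x → x ≤ max p.1 p'.1 → (x, p.1 + p.2 - x) ∈ S.pairs

/-- Nussinov-Jacobson energies: a for G-C, b for A-U, g for G-U. -/
def njE (a b g : ℝ) : Base → Base → ℝ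
  | .G, .C => a | .C, .G => a
  | .A, .U => b | .U, .A => b
  | .G, .U => g | .U, .G => g
  | _, _ => 0

/-- level of position i : #G minus #C in the prefix of w ending at i. -/
def lvl (w : List Base) (i : ℕ) : ℤ :=
  ((w.take (i+1)).count Base.G : ℤ) - ((w.take (i+1)).count Base.C : ℤ)


/- ===== auxiliary machinery ===== -/

lemma mySecStr_ext {S T : SecStr} (h1 : S.len = T.len) (h2 : S.pairs = T.pairs) : S = T := by
  cases S; cases T; simp_all

lemma myStutter_length {α : Type*} (w : List α) (k : ℕ) :
    (stutterSeq w k).length = k * w.length := by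
  induction w with
  | nil => simp [stutterSeq]
  | cons a t ih =>
    simp only [stutterSeq, List.flatMap_cons, List.length_append, List.length_replicate,
      List.length_cons] at *
    rw [ih]; ring

lemma myDiv_eq_iff {k i v : ℕ} (hk : 0 < k) : i / k = v ↔ k * v ≤ i ∧ i < k * v + k := by
  have h1 := Nat.div_add_mod i k
  have h2 := Nat.mod_lt i hk
  constructor
  · intro h; subst h; omega
  · rintro ⟨ha, hb⟩
    have := Nat.div_le_div_right (c := k) ha
    rw [Nat.mul_div_cancel_left _ hk] at this
    have h3 : i / k < v + 1 := Nat.div_lt_of_lt_mul (by rw [Nat.mul_succ]; omega)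
    omega

lemma myDiv_lt_imp {k i j : ℕ} (h : i / k < j / k) : i < j := by
  by_contra hc
  have := Nat.div_le_div_right (c := k) (Nat.le_of_not_lt (by omega : ¬ i < j))
  omega

lemma myStutter_getD {α : Type*} [Inhabited α] (w : List α) (k : ℕ) (i : ℕ)
    (hi : i < k * w.length) :
    (stutterSeq w k).getD i default = w.getD (i / k) default := by
  have hk : 0 < k := by
    rcases Nat.eq_zero_or_pos k with h | h
    · subst h; simp at hi
    · exact h
  induction w generalizing i with
  | nil => simp at hi
  | cons a t ih =>
    simp only [stutterSeq, List.flatMap_cons]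
    by_cases h : i < k
    · rw [List.getD_append _ _ _ _ (by simpa using h)]
      have : i / k = 0 := Nat.div_eq_of_lt h
      rw [this]
      simp [List.getD_eq_getElem?_getD, List.getElem?_replicate, h]
    · have hik : k ≤ i := by omega
      rw [List.getD_append_right _ _ _ _ (by simpa using hik)]
      simp only [List.length_replicate]
      have hrec : (stutterSeq t k).getD (i - k) default = t.getD ((i-k) / k) default := by
        apply ih
        simp only [List.length_cons] at hi
        have : k * (t.length + 1) = k * t.length + k := by ring
        omega
      change (stutterSeq t k).getD (i - k) default = _
      rw [hrec]
      have : i / k = (i - k) / k + 1 := by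
        rw [Nat.div_eq_sub_div hk hik]
      rw [this]
      simp [List.getD]

def myInc (e1 e2 : ℕ × ℕ → ℕ) (p : ℕ × ℕ) (v : ℕ) : Prop := e1 p = v ∨ e2 p = v

def myProper (k : ℕ) (P : Finset (ℕ × ℕ)) (e1 e2 : ℕ × ℕ → ℕ) (c : ℕ × ℕ → Fin k) : Prop :=
  ∀ p ∈ P, ∀ q ∈ P, p ≠ q → ∀ v, myInc e1 e2 p v → myInc e1 e2 q v → c p ≠ c q

def myReachIn (step : ℕ → ℕ → Prop) (u : ℕ) : ℕ → ℕ → Prop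
  | 0, x => x = u
  | n+1, x => myReachIn step u n x ∨ ∃ y, myReachIn step u n y ∧ step y x

lemma myBoolEq {a b c : Bool} (h1 : a ≠ c) (h2 : b ≠ c) : a = b := by
  rcases a <;> rcases b <;> rcases c <;> simp_all

def mySwap {k : ℕ} (α β γ : Fin k) : Fin k := if γ = α then β else if γ = β then α else γ

lemma mySwap_inj {k : ℕ} {α β : Fin k} (γ δ : Fin k)
    (h : mySwap α β γ = mySwap α β δ) : γ = δ := by
  unfold mySwap at h
  split_ifs at h <;> simp_all

lemma mySwap_ab {k : ℕ} {α β : Fin k} (γ : Fin k) (h : γ = α ∨ γ = β) :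
    mySwap α β γ = α ∨ mySwap α β γ = β := by
  rcases h with h | h <;> subst h <;> unfold mySwap <;> split_ifs <;> simp_all

lemma mySwap_beta {k : ℕ} {α β : Fin k} (hab : α ≠ β) : mySwap α β β = α := by
  unfold mySwap
  rw [if_neg (fun h => hab h.symm), if_pos rfl]

lemma myKonig (k : ℕ) (hk : 0 < k) (e1 e2 : ℕ × ℕ → ℕ) (side : ℕ → Bool) :
    ∀ P : Finset (ℕ × ℕ),
    (∀ p ∈ P, side (e1 p) ≠ side (e2 p)) →
    (∀ v, (P.filter (fun p => myInc e1 e2 p v)).card ≤ k) →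
    ∃ c : ℕ × ℕ → Fin k, myProper k P e1 e2 c := by
  suffices H : ∀ n : ℕ, ∀ P : Finset (ℕ × ℕ), P.card ≤ n →
      (∀ p ∈ P, side (e1 p) ≠ side (e2 p)) →
      (∀ v, (P.filter (fun p => myInc e1 e2 p v)).card ≤ k) →
      ∃ c : ℕ × ℕ → Fin k, myProper k P e1 e2 c by
    exact fun P h1 h2 => H P.card P le_rfl h1 h2
  intro n
  induction n with
  | zero =>
    intro P hcard _ _
    have : P = ∅ := Finset.card_eq_zero.mp (Nat.le_zero.mp hcard)
    subst this
    exact ⟨fun _ => ⟨0, hk⟩, fun p hp => absurd hp (Finset.notMem_empty p)⟩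
  | succ n ih =>
    intro P hcard hside hdeg
    rcases P.eq_empty_or_nonempty with hP | ⟨e, he⟩
    · subst hP
      exact ⟨fun _ => ⟨0, hk⟩, fun p hp => absurd hp (Finset.notMem_empty p)⟩
    set P' := P.erase e with hP'
    have hP'sub : P' ⊆ P := Finset.erase_subset _ _
    obtain ⟨c, hc⟩ := ih P' (by
        have h1 := Finset.card_erase_of_mem he
        have h2 : 0 < P.card := Finset.card_pos.mpr ⟨e, he⟩
        rw [hP']
        omega)
      (fun p hp => hside p (hP'sub hp))
      (fun v => le_trans (Finset.card_le_card (Finset.filter_subset_filter _ hP'sub)) (hdeg v))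
    -- missing colors at the endpoints of e
    have hmiss : ∀ x, myInc e1 e2 e x →
        ∃ γ : Fin k, ∀ p ∈ P', myInc e1 e2 p x → c p ≠ γ := by
      intro x hex
      set F := P'.filter (fun p => myInc e1 e2 p x) with hF
      have heF : e ∉ F := fun h => (Finset.mem_erase.mp (Finset.mem_filter.mp h).1).1 rfl
      have h1 : F.card < k := by
        have hsub : insert e F ⊆ P.filter (fun p => myInc e1 e2 p x) := by
          intro q hq
          rcases Finset.mem_insert.mp hq with h | h
          · subst h; exact Finset.mem_filter.mpr ⟨he, hex⟩
          · have := Finset.mem_filter.mp h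
            exact Finset.mem_filter.mpr ⟨hP'sub this.1, this.2⟩
        have := le_trans (Finset.card_le_card hsub) (hdeg x)
        rw [Finset.card_insert_of_notMem heF] at this
        omega
      have h2 : (F.image c).card < k := lt_of_le_of_lt Finset.card_image_le h1
      have : ∃ γ : Fin k, γ ∉ F.image c := by
        by_contra hcon
        push_neg at hcon
        have hsub : (Finset.univ : Finset (Fin k)) ⊆ F.image c := fun γ _ => hcon γ
        have := Finset.card_le_card hsub
        simp [Finset.card_univ] at this
        omega
      obtain ⟨γ, hγ⟩ := this
      exact ⟨γ, fun p hp hpx hcp =>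
        hγ (Finset.mem_image.mpr ⟨p, Finset.mem_filter.mpr ⟨hp, hpx⟩, hcp⟩)⟩
    obtain ⟨α, hα⟩ := hmiss (e1 e) (Or.inl rfl)
    obtain ⟨β, hβ⟩ := hmiss (e2 e) (Or.inr rfl)
    set u := e1 e with hu
    set v := e2 e with hv
    have huv : side u ≠ side v := hside e he
    have hends : ∀ p ∈ P, ∀ x y, myInc e1 e2 p x → myInc e1 e2 p y → x ≠ y →
        ((e1 p = x ∧ e2 p = y) ∨ (e1 p = y ∧ e2 p = x)) := by
      intro p _ x y hx hy hxy
      rcases hx with h | h <;> rcases hy with h' | h'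
      · exact absurd (h.symm.trans h') hxy
      · exact Or.inl ⟨h, h'⟩
      · exact Or.inr ⟨h', h⟩
      · exact absurd (h.symm.trans h') hxy
    have hne12 : ∀ p ∈ P, e1 p ≠ e2 p := fun p hp h => hside p hp (by rw [h])
    by_cases hab : α = β
    · -- trivial extension
      refine ⟨Function.update c e α, ?_⟩
      intro p hp q hq hne x hpx hqx
      by_cases hpe : p = e <;> by_cases hqe : q = e
      · exact absurd (hpe.trans hqe.symm) hne
      · subst hpe
        rw [Function.update_self, Function.update_of_ne hqe]
        have hq' : q ∈ P' := Finset.mem_erase.mpr ⟨hqe, hq⟩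
        intro hh
        rcases hpx with h | h
        · exact hα q hq' (by rw [hu, h]; exact hqx) hh.symm
        · exact hβ q hq' (by rw [hv, h]; exact hqx) (hh.symm.trans hab)
      · subst hqe
        rw [Function.update_self, Function.update_of_ne hpe]
        have hp' : p ∈ P' := Finset.mem_erase.mpr ⟨hpe, hp⟩
        intro hh
        rcases hqx with h | h
        · exact hα p hp' (by rw [hu, h]; exact hpx) hh
        · exact hβ p hp' (by rw [hv, h]; exact hpx) (hh.trans hab)
      · rw [Function.update_of_ne hpe, Function.update_of_ne hqe]
        exact hc p (Finset.mem_erase.mpr ⟨hpe, hp⟩) q (Finset.mem_erase.mpr ⟨hqe, hq⟩)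
          hne x hpx hqx
    · -- recoloring along alternating component
      set step : ℕ → ℕ → Prop := fun x y => ∃ p ∈ P',
        myInc e1 e2 p x ∧ myInc e1 e2 p y ∧ x ≠ y ∧ (c p = α ∨ c p = β) with hstepdef
      set Reach : ℕ → Prop := fun x => ∃ m, myReachIn step u m x with hReachdef
      have hreach_u : Reach u := ⟨0, rfl⟩
      have hreach_step : ∀ x y, Reach x → step x y → Reach y :=
        fun x y ⟨m, hm⟩ hs => ⟨m + 1, Or.inr ⟨x, hm, hs⟩⟩
      have hstep_side : ∀ x y, step x y → side x ≠ side y := by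
        rintro x y ⟨p, hp, hx, hy, hxy, -⟩
        rcases hends p (hP'sub hp) x y hx hy hxy with ⟨h1, h2⟩ | ⟨h1, h2⟩
        · rw [← h1, ← h2]; exact hside p (hP'sub hp)
        · rw [← h1, ← h2]; exact (hside p (hP'sub hp)).symm
      have hswap_reach : ∀ p ∈ P', (c p = α ∨ c p = β) →
          (Reach (e1 p) ∨ Reach (e2 p)) → Reach (e1 p) ∧ Reach (e2 p) := by
        intro p hp hcab hr
        have hne' : e1 p ≠ e2 p := hne12 p (hP'sub hp)
        have hs12 : step (e1 p) (e2 p) := ⟨p, hp, Or.inl rfl, Or.inr rfl, hne', hcab⟩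
        have hs21 : step (e2 p) (e1 p) := ⟨p, hp, Or.inr rfl, Or.inl rfl, hne'.symm, hcab⟩
        rcases hr with h | h
        · exact ⟨h, hreach_step _ _ h hs12⟩
        · exact ⟨hreach_step _ _ h hs21, h⟩
      have huniq : ∀ p ∈ P', ∀ q ∈ P', ∀ x, myInc e1 e2 p x → myInc e1 e2 q x →
          c p = c q → p = q := by
        intro p hp q hq x hpx hqx hcc
        by_contra hne
        exact hc p hp q hq hne x hpx hqx hcc
      -- v is not reachable (parity / bipartite argument)
      have hnotv : ¬ Reach v := by
        intro hRv
        set γf : ℕ → Fin k := fun x => if side x = side u then α else β with hγf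
        have key : ∀ m : ℕ, ∀ x, ∀ hx : Reach x, Nat.find hx = m →
            x = u ∨ ∃ p ∈ P', myInc e1 e2 p x ∧ c p = γf x ∧
              ∃ y, (∃ hy : Reach y, Nat.find hy < m) ∧ myInc e1 e2 p y ∧ y ≠ x := by
          intro m
          induction m using Nat.strong_induction_on with
          | _ m IH =>
            intro x hx hfind
            by_cases hxu : x = u
            · exact Or.inl hxu
            right
            have hspec : myReachIn step u m x := hfind ▸ Nat.find_spec hx
            rcases m with _ | m
            · exact absurd hspec hxu
            rw [myReachIn] at hspec
            rcases hspec with hspec | ⟨y, hym, hstep⟩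
            · have : Nat.find hx ≤ m := Nat.find_le hspec
              omega
            have hRy : Reach y := ⟨m, hym⟩
            have hdy : Nat.find hRy ≤ m := Nat.find_le hym
            obtain ⟨p, hp, hpy, hpx, hyx, hpab⟩ := hstep
            have hsxy : side y ≠ side x := hstep_side _ _ ⟨p, hp, hpy, hpx, hyx, hpab⟩
            have hgxy : (γf x = α ∧ γf y = β) ∨ (γf x = β ∧ γf y = α) := by
              by_cases hsu : side x = side u
              · left
                have hny : ¬ side y = side u := fun h => hsxy (h.trans hsu.symm)
                constructor
                · show (if side x = side u then α else β) = α
                  rw [if_pos hsu]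
                · show (if side y = side u then α else β) = β
                  rw [if_neg hny]
              · right
                have hyu : side y = side u :=
                  myBoolEq hsxy (fun h => hsu h.symm)
                constructor
                · show (if side x = side u then α else β) = β
                  rw [if_neg hsu]
                · show (if side y = side u then α else β) = α
                  rw [if_pos hyu]
            by_cases hcp : c p = γf x
            · exact ⟨p, hp, hpx, hcp, y, ⟨hRy, by omega⟩, hpy, hyx⟩
            · have hcpy : c p = γf y := by
                rcases hgxy with ⟨h1, h2⟩ | ⟨h1, h2⟩ <;> rcases hpab with h | h
                · exact absurd (h.trans h1.symm) hcp
                · rw [h2]; exact h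
                · rw [h2]; exact h
                · exact absurd (h.trans h1.symm) hcp
              by_cases hyu : y = u
              · have hgα : γf y = α := by
                  show (if side y = side u then α else β) = α
                  rw [if_pos (by rw [hyu])]
                exact absurd (hcpy.trans hgα) (hα p hp (by rw [← hyu]; exact hpy))
              · obtain ⟨q, hq, hqy, hcq, z, ⟨hRz, hz⟩, hqz, hzy⟩ :=
                  (IH (Nat.find hRy) (by omega) y hRy rfl).resolve_left hyu
                have hpq : p = q := huniq p hp q hq y hpy hqy (hcpy.trans hcq.symm)
                subst hpq
                have hzx : z = x := by
                  rcases hends p (hP'sub hp) x y hpx hpy (fun h => hyx h.symm)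
                    with ⟨h1, h2⟩ | ⟨h1, h2⟩ <;> rcases hqz with h | h <;> omega
                subst hzx
                have hfeq : Nat.find hRz = Nat.find hx := by
                  rw [Subsingleton.elim hRz hx]
                omega
        have hvu : v ≠ u := fun h => huv (by rw [h])
        rcases key (Nat.find hRv) v hRv rfl with h | ⟨p, hp, hpv, hcp, -⟩
        · exact hvu h
        · have : γf v = β := by
            have hnv : ¬ side v = side u := fun h => huv h.symm
            show (if side v = side u then α else β) = β
            rw [if_neg hnv]
          exact hβ p hp hpv (hcp.trans this)
      -- the swapped coloring
      set cond : ℕ × ℕ → Prop := fun p =>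
        p ∈ P' ∧ (c p = α ∨ c p = β) ∧ (Reach (e1 p) ∨ Reach (e2 p)) with hconddef
      set c' : ℕ × ℕ → Fin k := fun p => if cond p then mySwap α β (c p) else c p with hc'def
      have hreach_of_cond : ∀ p, cond p → ∀ x, myInc e1 e2 p x → Reach x := by
        rintro p ⟨hp, hcab, hr⟩ x hx
        have := hswap_reach p hp hcab hr
        rcases hx with h | h
        · rw [← h]; exact this.1
        · rw [← h]; exact this.2
      have hc'_eq_pos : ∀ p, cond p → c' p = mySwap α β (c p) := by
        intro p h
        show (if cond p then mySwap α β (c p) else c p) = _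
        rw [if_pos h]
      have hc'_eq_neg : ∀ p, ¬ cond p → c' p = c p := by
        intro p h
        show (if cond p then mySwap α β (c p) else c p) = _
        rw [if_neg h]
      have hc'_proper : myProper k P' e1 e2 c' := by
        intro p hp q hq hne x hpx hqx
        by_cases h1 : cond p <;> by_cases h2 : cond q
        · rw [hc'_eq_pos p h1, hc'_eq_pos q h2]
          exact fun h => hc p hp q hq hne x hpx hqx (mySwap_inj _ _ h)
        · rw [hc'_eq_pos p h1, hc'_eq_neg q h2]
          intro h
          apply h2
          have hRx : Reach x := hreach_of_cond p h1 x hpx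
          have hcq : c q = α ∨ c q = β := by
            have := mySwap_ab (c p) h1.2.1
            rw [h] at this
            exact this
          exact ⟨hq, hcq, by
            rcases hqx with hh | hh
            · exact Or.inl (by rw [hh]; exact hRx)
            · exact Or.inr (by rw [hh]; exact hRx)⟩
        · rw [hc'_eq_neg p h1, hc'_eq_pos q h2]
          intro h
          apply h1
          have hRx : Reach x := hreach_of_cond q h2 x hqx
          have hcp : c p = α ∨ c p = β := by
            have := mySwap_ab (c q) h2.2.1
            rw [← h] at this
            exact this
          exact ⟨hp, hcp, by
            rcases hpx with hh | hh
            · exact Or.inl (by rw [hh]; exact hRx)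
            · exact Or.inr (by rw [hh]; exact hRx)⟩
        · rw [hc'_eq_neg p h1, hc'_eq_neg q h2]
          exact hc p hp q hq hne x hpx hqx
      have hc'_u : ∀ q ∈ P', myInc e1 e2 q u → c' q ≠ β := by
        intro q hq hqu
        by_cases hcond : cond q
        · have hcq : c q = β := by
            rcases hcond.2.1 with h | h
            · exact absurd h (hα q hq hqu)
            · exact h
          rw [hc'_eq_pos q hcond, hcq, mySwap_beta hab]
          exact hab
        · rw [hc'_eq_neg q hcond]
          intro h
          apply hcond
          refine ⟨hq, Or.inr h, ?_⟩
          rcases hqu with hh | hh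
          · exact Or.inl (by rw [hh]; exact hreach_u)
          · exact Or.inr (by rw [hh]; exact hreach_u)
      have hc'_v : ∀ q ∈ P', myInc e1 e2 q v → c' q ≠ β := by
        intro q hq hqv
        have hnocond : ¬ cond q := by
          intro hcond
          exact hnotv (hreach_of_cond q hcond v hqv)
        rw [hc'_eq_neg q hnocond]
        exact hβ q hq hqv
      refine ⟨Function.update c' e β, ?_⟩
      intro p hp q hq hne x hpx hqx
      by_cases hpe : p = e <;> by_cases hqe : q = e
      · exact absurd (hpe.trans hqe.symm) hne
      · subst hpe
        rw [Function.update_self, Function.update_of_ne hqe]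
        have hq' : q ∈ P' := Finset.mem_erase.mpr ⟨hqe, hq⟩
        intro hh
        rcases hpx with h | h
        · exact hc'_u q hq' (by rw [hu, h]; exact hqx) hh.symm
        · exact hc'_v q hq' (by rw [hv, h]; exact hqx) hh.symm
      · subst hqe
        rw [Function.update_self, Function.update_of_ne hpe]
        have hp' : p ∈ P' := Finset.mem_erase.mpr ⟨hpe, hp⟩
        intro hh
        rcases hqx with h | h
        · exact hc'_u p hp' (by rw [hu, h]; exact hpx) hh
        · exact hc'_v p hp' (by rw [hv, h]; exact hpx) hh
      · rw [Function.update_of_ne hpe, Function.update_of_ne hqe]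
        exact hc'_proper p (Finset.mem_erase.mpr ⟨hpe, hp⟩) q (Finset.mem_erase.mpr ⟨hqe, hq⟩)
          hne x hpx hqx


lemma myBlock {k : ℕ} (a m : ℕ) (hk : 0 < k) (hm : m < k) : (k * a + m) / k = a := by
  rw [Nat.mul_add_div hk, Nat.div_eq_of_lt hm, Nat.add_zero]

/-- Projection of a subset of pairs of a structure on the k-stutter back to
a structure on the original sequence. -/
lemma myProj (k n : ℕ) (hk : 0 < k) (S' : SecStr) (hlen : S'.len = k * n)
    (hnl : ∀ p ∈ S'.pairs, p.1 / k ≠ p.2 / k)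
    (Q : Finset (ℕ × ℕ)) (hQ : Q ⊆ S'.pairs)
    (hQc : ∀ p ∈ Q, ∀ q ∈ Q, p ≠ q → ∀ v,
      myInc (fun p => p.1 / k) (fun p => p.2 / k) p v →
      myInc (fun p => p.1 / k) (fun p => p.2 / k) q v → False) :
    ∃ T : SecStr, T.len = n ∧ T.pairs = Q.image (fun p => (p.1 / k, p.2 / k)) := by
  have hnb : ∀ p ∈ Q, ∀ q ∈ Q, (p.1 / k, p.2 / k) ≠ (q.1 / k, q.2 / k) → p ≠ q := by
    rintro p _ q _ hne rfl; exact hne rfl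
  refine ⟨⟨n, Q.image (fun p => (p.1 / k, p.2 / k)), ?_, ?_, ?_, ?_⟩, rfl, rfl⟩
  · rintro P hP
    obtain ⟨p, hp, rfl⟩ := Finset.mem_image.mp hP
    have h1 : p.1 / k ≤ p.2 / k := Nat.div_le_div_right (le_of_lt (S'.lt p (hQ hp)))
    exact lt_of_le_of_ne h1 (hnl p (hQ hp))
  · rintro P hP
    obtain ⟨p, hp, rfl⟩ := Finset.mem_image.mp hP
    have h1 : p.2 < k * n := hlen ▸ S'.ub p (hQ hp)
    exact Nat.div_lt_of_lt_mul h1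
  · rintro P hP Q' hQ' hne
    obtain ⟨p, hp, rfl⟩ := Finset.mem_image.mp hP
    obtain ⟨q, hq, rfl⟩ := Finset.mem_image.mp hQ'
    have hpq : p ≠ q := by rintro rfl; exact hne rfl
    refine ⟨?_, ?_, ?_, ?_⟩ <;> intro h <;> simp only at h
    · exact hQc p hp q hq hpq (p.1 / k) (Or.inl rfl) (Or.inl h.symm)
    · exact hQc p hp q hq hpq (p.1 / k) (Or.inl rfl) (Or.inr h.symm)
    · exact hQc p hp q hq hpq (p.2 / k) (Or.inr rfl) (Or.inl h.symm)
    · exact hQc p hp q hq hpq (p.2 / k) (Or.inr rfl) (Or.inr h.symm)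
  · rintro P hP Q' hQ'
    obtain ⟨p, hp, rfl⟩ := Finset.mem_image.mp hP
    obtain ⟨q, hq, rfl⟩ := Finset.mem_image.mp hQ'
    rintro ⟨h1, h2, h3⟩
    exact S'.noncross p (hQ hp) q (hQ hq)
      ⟨myDiv_lt_imp h1, myDiv_lt_imp h2, myDiv_lt_imp h3⟩


lemma myCellInj {k : ℕ} (hk : 0 < k) {a b m a' b' m' : ℕ} (hm : m < k) (hm' : m' < k)
    (h1 : k * a + m = k * a' + m') (h2 : k * b + (k - 1 - m) = k * b' + (k - 1 - m')) :
    a = a' ∧ b = b' ∧ m = m' := by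
  have e1 := myBlock (k := k) a m hk hm
  have e2 := myBlock (k := k) a' m' hk hm'
  rw [h1] at e1
  have ha : a = a' := e1.symm.trans e2
  have e3 := myBlock (k := k) b (k - 1 - m) hk (by omega)
  have e4 := myBlock (k := k) b' (k - 1 - m') hk (by omega)
  rw [h2] at e3
  have hb : b = b' := e3.symm.trans e4
  subst ha
  exact ⟨rfl, hb, by omega⟩

/-- in any bipartite base-pair-sum energy model, if w is a
Δ-design for S then the k-stutter of w is a Δ-design for the k-stutter of S. -/
theorem stmt15 {α : Type*} [Inhabited α] (R : α → α → Prop) (E : α → α → ℝ)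
    (Δ : ℝ) (hΔ : 0 < Δ) (hbip : Bipartite R) (w : List α) (S : SecStr)
    (hdes : isDesign R E Δ w S) (k : ℕ) (hk : 1 ≤ k)
    (Sk : SecStr) (hlen : Sk.len = k * S.len) (hpairs : Sk.pairs = stutterPairs S k) :
    isDesign R E Δ (stutterSeq w k) Sk := by
  obtain ⟨f, hf⟩ := hbip
  obtain ⟨⟨hSlen, hScompat⟩, hSmin⟩ := hdes
  have hk0 : 0 < k := hk
  have hstutlen : (stutterSeq w k).length = k * w.length := myStutter_length w k
  have hSkpair_getD : ∀ q ∈ S.pairs, ∀ m < k,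
      (stutterSeq w k).getD (k * q.1 + m) default = w.getD q.1 default ∧
      (stutterSeq w k).getD (k * q.2 + (k - 1 - m)) default = w.getD q.2 default := by
    intro q hq m hm
    have hq2 : q.2 < w.length := hSlen ▸ S.ub q hq
    have hq1 : q.1 < w.length := lt_trans (S.lt q hq) hq2
    constructor
    · rw [myStutter_getD _ _ _ (by
        have h1 : k * (q.1 + 1) ≤ k * w.length := Nat.mul_le_mul_left k hq1
        have h2 : k * (q.1 + 1) = k * q.1 + k := by ring
        omega), myBlock q.1 m hk0 hm]
    · rw [myStutter_getD _ _ _ (by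
        have h1 : k * (q.2 + 1) ≤ k * w.length := Nat.mul_le_mul_left k hq2
        have h2 : k * (q.2 + 1) = k * q.2 + k := by ring
        omega), myBlock q.2 (k - 1 - m) hk0 (by omega)]
  have hSkcompat : compat R (stutterSeq w k) Sk := by
    constructor
    · rw [hlen, hSlen, hstutlen]
    · intro p hp
      rw [hpairs] at hp
      obtain ⟨q, hq, hp2⟩ := Finset.mem_biUnion.mp hp
      obtain ⟨m, hm, rfl⟩ := Finset.mem_image.mp hp2
      obtain ⟨h1, h2⟩ := hSkpair_getD q hq m (Finset.mem_range.mp hm)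
      simp only
      rw [h1, h2]
      exact hScompat q hq
  have hdisj : (↑S.pairs : Set (ℕ × ℕ)).PairwiseDisjoint
      (fun p => (Finset.range k).image
        (fun m => (k * p.1 + m, k * p.2 + (k - 1 - m)))) := by
    intro q hq q' hq' hne
    refine Finset.disjoint_left.mpr ?_
    intro x hx hx'
    obtain ⟨m, hm, rfl⟩ := Finset.mem_image.mp hx
    obtain ⟨m', hm', heq⟩ := Finset.mem_image.mp hx'
    rw [Prod.ext_iff] at heq
    obtain ⟨ha, hb, -⟩ := myCellInj hk0 (Finset.mem_range.mp hm') (Finset.mem_range.mp hm)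
      heq.1 heq.2
    exact hne (Prod.ext ha.symm hb.symm)
  have hSkenergy : energy E (stutterSeq w k) Sk = (k : ℝ) * energy E w S := by
    rw [energy, hpairs, stutterPairs, Finset.sum_biUnion hdisj, energy, Finset.mul_sum]
    refine Finset.sum_congr rfl ?_
    intro q hq
    rw [Finset.sum_image (by
      intro m hm m' hm' h
      rw [Prod.ext_iff] at h
      simp only at h
      omega)]
    rw [Finset.sum_congr rfl (fun m hm => by
      obtain ⟨h1, h2⟩ := hSkpair_getD q hq m (Finset.mem_range.mp hm)
      simp only
      rw [h1, h2])]
    rw [Finset.sum_const, Finset.card_range, nsmul_eq_mul]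
  refine ⟨hSkcompat, ?_⟩
  intro S' hcompat' hneq
  have hS'len : S'.len = k * w.length := hcompat'.1.trans hstutlen
  set e1 : ℕ × ℕ → ℕ := fun p => p.1 / k with he1
  set e2 : ℕ × ℕ → ℕ := fun p => p.2 / k with he2
  set side : ℕ → Bool := fun a => f (w.getD a default) with hsidedef
  have hbounds : ∀ p ∈ S'.pairs, p.1 < k * w.length ∧ p.2 < k * w.length := by
    intro p hp
    have h2 := hS'len ▸ S'.ub p hp
    exact ⟨lt_trans (S'.lt p hp) h2, h2⟩
  have hRproj : ∀ p ∈ S'.pairs,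
      R (w.getD (p.1 / k) default) (w.getD (p.2 / k) default) := by
    intro p hp
    have h0 := hcompat'.2 p hp
    rw [myStutter_getD _ _ _ (hbounds p hp).1, myStutter_getD _ _ _ (hbounds p hp).2] at h0
    exact h0
  have hside : ∀ p ∈ S'.pairs, side (e1 p) ≠ side (e2 p) :=
    fun p hp => hf _ _ (hRproj p hp)
  have hnl : ∀ p ∈ S'.pairs, p.1 / k ≠ p.2 / k := by
    intro p hp h
    exact hside p hp (by show f (w.getD (p.1 / k) default) = _; rw [h])
  have hdeg : ∀ v, (S'.pairs.filter (fun p => myInc e1 e2 p v)).card ≤ k := by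
    intro v
    have hcIco : (Finset.Ico (k * v) (k * v + k)).card = k := by
      rw [Nat.card_Ico]; omega
    rw [← hcIco]
    apply Finset.card_le_card_of_injOn (fun p => if p.1 / k = v then p.1 else p.2)
    · intro p hp
      obtain ⟨hp1, hp2⟩ := Finset.mem_filter.mp hp
      by_cases h : p.1 / k = v
      · show (if p.1 / k = v then p.1 else p.2) ∈ Finset.Ico (k * v) (k * v + k)
        rw [if_pos h, Finset.mem_Ico]
        exact (myDiv_eq_iff hk0).mp h
      · show (if p.1 / k = v then p.1 else p.2) ∈ Finset.Ico (k * v) (k * v + k)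
        rw [if_neg h, Finset.mem_Ico]
        have h2 : p.2 / k = v := by
          rcases hp2 with hh | hh
          · exact absurd hh h
          · exact hh
        exact (myDiv_eq_iff hk0).mp h2
    · intro p hp q hq hpq
      by_contra hne
      obtain ⟨o1, o2, o3, o4⟩ := S'.once p (Finset.mem_filter.mp (Finset.mem_coe.mp hp)).1
        q (Finset.mem_filter.mp (Finset.mem_coe.mp hq)).1 hne
      change (if p.1 / k = v then p.1 else p.2) = (if q.1 / k = v then q.1 else q.2) at hpq
      split_ifs at hpq with h1 h2 h2
      · exact o1 hpq
      · exact o2 hpq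
      · exact o3 hpq
      · exact o4 hpq
  obtain ⟨c, hcprop⟩ := myKonig k hk0 e1 e2 side S'.pairs hside hdeg
  have hT : ∀ c0 : Fin k, ∃ T : SecStr, T.len = w.length ∧
      T.pairs = (S'.pairs.filter (fun p => c p = c0)).image
        (fun p => (p.1 / k, p.2 / k)) := by
    intro c0
    apply myProj k w.length hk0 S' hS'len hnl _ (Finset.filter_subset _ _)
    intro p hp q hq hpq v hv1 hv2
    obtain ⟨hp', hcp⟩ := Finset.mem_filter.mp hp
    obtain ⟨hq', hcq⟩ := Finset.mem_filter.mp hq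
    exact hcprop p hp' q hq' hpq v hv1 hv2 (hcp.trans hcq.symm)
  choose T hTlen hTpairs using hT
  have hprojinj : ∀ c0 : Fin k, ∀ p ∈ S'.pairs.filter (fun p => c p = c0),
      ∀ q ∈ S'.pairs.filter (fun p => c p = c0),
      (p.1 / k, p.2 / k) = (q.1 / k, q.2 / k) → p = q := by
    intro c0 p hp q hq hpq
    by_contra hne
    obtain ⟨hp', hcp⟩ := Finset.mem_filter.mp hp
    obtain ⟨hq', hcq⟩ := Finset.mem_filter.mp hq
    rw [Prod.ext_iff] at hpq
    exact hcprop p hp' q hq' hne (p.1 / k) (Or.inl rfl) (Or.inl hpq.1.symm)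
      (hcp.trans hcq.symm)
  have hTcompat : ∀ c0, compat R w (T c0) := by
    intro c0
    refine ⟨hTlen c0, ?_⟩
    intro p hp
    rw [hTpairs] at hp
    obtain ⟨q, hq, rfl⟩ := Finset.mem_image.mp hp
    exact hRproj q (Finset.mem_filter.mp hq).1
  have hsum : energy E (stutterSeq w k) S' = ∑ c0 : Fin k, energy E w (T c0) := by
    have h1 : energy E (stutterSeq w k) S' =
        ∑ p ∈ S'.pairs, E (w.getD (p.1 / k) default) (w.getD (p.2 / k) default) :=
      Finset.sum_congr rfl (fun p hp => by
        rw [myStutter_getD _ _ _ (hbounds p hp).1, myStutter_getD _ _ _ (hbounds p hp).2])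
    rw [h1, ← Finset.sum_fiberwise S'.pairs c
      (fun p => E (w.getD (p.1 / k) default) (w.getD (p.2 / k) default))]
    refine Finset.sum_congr rfl ?_
    intro c0 _
    rw [energy, hTpairs, Finset.sum_image (hprojinj c0)]
  have hmin : ∀ c0, energy E w S ≤ energy E w (T c0) := by
    intro c0
    by_cases h : T c0 = S
    · rw [h]
    · have h2 := hSmin (T c0) (hTcompat c0) h
      linarith
  by_cases hall : ∀ c0 : Fin k, T c0 = S
  · -- then S' = Sk, contradiction
    exfalso
    apply hneq
    have hTeq : ∀ c0 : Fin k,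
        (S'.pairs.filter (fun p => c p = c0)).image (fun p => (p.1 / k, p.2 / k))
          = S.pairs := fun c0 => (hTpairs c0).symm.trans (congrArg SecStr.pairs (hall c0))
    have hcardclass : ∀ c0 : Fin k,
        (S'.pairs.filter (fun p => c p = c0)).card = S.pairs.card := by
      intro c0
      rw [← hTeq c0, Finset.card_image_of_injOn
        (fun p hp q hq h => hprojinj c0 p hp q hq h)]
    have hcardS' : S'.pairs.card = k * S.pairs.card := by
      rw [Finset.card_eq_sum_card_fiberwise (f := c) (t := Finset.univ)
        (fun x _ => Finset.mem_univ _)]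
      rw [Finset.sum_congr rfl (fun c0 _ => hcardclass c0), Finset.sum_const,
        Finset.card_univ, Fintype.card_fin, smul_eq_mul]
    have hcardStutter : (stutterPairs S k).card = k * S.pairs.card := by
      rw [stutterPairs, Finset.card_biUnion (fun q hq q' hq' hne => hdisj hq hq' hne)]
      rw [Finset.sum_congr rfl (fun q hq => Finset.card_image_of_injOn (by
        intro m hm m' hm' h
        rw [Prod.ext_iff] at h
        have := h.1
        simp only at this
        omega))]
      rw [Finset.sum_const, Finset.card_range, smul_eq_mul, Nat.mul_comm]
    have hsub : S'.pairs ⊆ stutterPairs S k := by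
      intro r hr
      have hab : (r.1 / k, r.2 / k) ∈ S.pairs := by
        rw [← hTeq (c r)]
        exact Finset.mem_image.mpr ⟨r, Finset.mem_filter.mpr ⟨hr, rfl⟩, rfl⟩
      set a := r.1 / k with ha
      set b := r.2 / k with hb
      set A := S'.pairs.filter (fun p => p.1 / k = a ∧ p.2 / k = b) with hA
      have hrA : r ∈ A := Finset.mem_filter.mpr ⟨hr, rfl, rfl⟩
      have hexists : ∀ c0 : Fin k, ∃ p ∈ A, c p = c0 := by
        intro c0
        have h0 : (a, b) ∈ (S'.pairs.filter (fun p => c p = c0)).image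
            (fun p => (p.1 / k, p.2 / k)) := (hTeq c0).symm ▸ hab
        obtain ⟨p, hp, hproj⟩ := Finset.mem_image.mp h0
        obtain ⟨hp', hcp⟩ := Finset.mem_filter.mp hp
        rw [Prod.ext_iff] at hproj
        exact ⟨p, Finset.mem_filter.mpr ⟨hp', hproj.1, hproj.2⟩, hcp⟩
      have hAmem : ∀ p ∈ A, p ∈ S'.pairs ∧ p.1 / k = a ∧ p.2 / k = b :=
        fun p hp => by
          obtain ⟨h1, h2, h3⟩ := Finset.mem_filter.mp hp
          exact ⟨h1, h2, h3⟩
      have hcinj : ∀ p ∈ A, ∀ q ∈ A, c p = c q → p = q := by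
        intro p hp q hq hcc
        by_contra hne
        obtain ⟨hp1, hp2, -⟩ := hAmem p hp
        obtain ⟨hq1, hq2, -⟩ := hAmem q hq
        exact hcprop p hp1 q hq1 hne a (Or.inl hp2) (Or.inl hq2) hcc
      have hAcard : A.card = k := by
        apply le_antisymm
        · have := Finset.card_le_card_of_injOn c (fun p _ => Finset.mem_univ (c p))
            (fun p hp q hq h => hcinj p hp q hq h)
          rwa [Finset.card_univ, Fintype.card_fin] at this
        · have hsub2 : (Finset.univ : Finset (Fin k)) ⊆ A.image c := by
            intro c0 _
            obtain ⟨p, hp, hcp⟩ := hexists c0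
            exact Finset.mem_image.mpr ⟨p, hp, hcp⟩
          have := Finset.card_le_card hsub2
          rw [Finset.card_univ, Fintype.card_fin] at this
          exact le_trans this Finset.card_image_le
      have hfstinj : ∀ p ∈ A, ∀ q ∈ A, p.1 = q.1 → p = q := by
        intro p hp q hq h
        by_contra hne
        exact (S'.once p (hAmem p hp).1 q (hAmem q hq).1 hne).1 h
      have hsndinj : ∀ p ∈ A, ∀ q ∈ A, p.2 = q.2 → p = q := by
        intro p hp q hq h
        by_contra hne
        exact (S'.once p (hAmem p hp).1 q (hAmem q hq).1 hne).2.2.2 h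
      have hmemb : ∀ p ∈ A, (k * a ≤ p.1 ∧ p.1 < k * a + k) ∧
          (k * b ≤ p.2 ∧ p.2 < k * b + k) := by
        intro p hp
        obtain ⟨-, h2, h3⟩ := hAmem p hp
        exact ⟨(myDiv_eq_iff hk0).mp h2, (myDiv_eq_iff hk0).mp h3⟩
      have hfstimg : A.image Prod.fst = Finset.Ico (k * a) (k * a + k) := by
        apply Finset.eq_of_subset_of_card_le
        · intro x hx
          obtain ⟨p, hp, rfl⟩ := Finset.mem_image.mp hx
          exact Finset.mem_Ico.mpr (hmemb p hp).1
        · rw [Nat.card_Ico, Finset.card_image_of_injOn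
            (fun p hp q hq h => hfstinj p hp q hq h), hAcard]
          omega
      have hsndimg : A.image Prod.snd = Finset.Ico (k * b) (k * b + k) := by
        apply Finset.eq_of_subset_of_card_le
        · intro x hx
          obtain ⟨p, hp, rfl⟩ := Finset.mem_image.mp hx
          exact Finset.mem_Ico.mpr (hmemb p hp).2
        · rw [Nat.card_Ico, Finset.card_image_of_injOn
            (fun p hp q hq h => hsndinj p hp q hq h), hAcard]
          omega
      have haltb : a < b := S.lt (a, b) hab
      have hanti : ∀ p ∈ A, ∀ q ∈ A, p.1 < q.1 → q.2 < p.2 := by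
        intro p hp q hq h1
        have hne : p ≠ q := fun h => by rw [h] at h1; exact lt_irrefl _ h1
        have hab2 : k * (a + 1) ≤ k * b := Nat.mul_le_mul_left k haltb
        have heq : k * (a + 1) = k * a + k := by ring
        obtain ⟨⟨-, hq1⟩, -⟩ := hmemb q hq
        obtain ⟨-, ⟨hp2, -⟩⟩ := hmemb p hp
        have h2 : q.1 < p.2 := by omega
        have h3 := S'.noncross p (hAmem p hp).1 q (hAmem q hq).1
        have h4 : p.2 ≠ q.2 := (S'.once p (hAmem p hp).1 q (hAmem q hq).1 hne).2.2.2
        by_contra h5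
        exact h3 ⟨h1, h2, by omega⟩
      set B1 := A.filter (fun q => q.1 < r.1) with hB1
      set B2 := A.filter (fun q => r.2 < q.2) with hB2
      have hB12 : B1 = B2 := by
        ext q
        simp only [hB1, hB2, Finset.mem_filter]
        constructor
        · rintro ⟨hq, h⟩
          exact ⟨hq, hanti q hq r hrA h⟩
        · rintro ⟨hq, h⟩
          refine ⟨hq, ?_⟩
          have hne : q ≠ r := fun hh => by rw [hh] at h; exact lt_irrefl _ h
          have h1 : q.1 ≠ r.1 := fun hh => hne (hfstinj q hq r hrA hh)
          by_contra h2
          have h3 : r.1 < q.1 := by omega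
          exact absurd h (not_lt_of_gt (hanti r hrA q hq h3))
      obtain ⟨⟨hr1, hr2⟩, hr3, hr4⟩ := hmemb r hrA
      have hB1card : B1.card = r.1 - k * a := by
        have himg : B1.image Prod.fst = Finset.Ico (k * a) r.1 := by
          ext x
          constructor
          · intro hx
            obtain ⟨p, hp, rfl⟩ := Finset.mem_image.mp hx
            obtain ⟨hpA, hplt⟩ := Finset.mem_filter.mp hp
            obtain ⟨⟨hx1, -⟩, -⟩ := hmemb p hpA
            exact Finset.mem_Ico.mpr ⟨hx1, hplt⟩
          · intro hx
            obtain ⟨hx1, hx2⟩ := Finset.mem_Ico.mp hx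
            have hx3 : x ∈ A.image Prod.fst := by
              rw [hfstimg]
              exact Finset.mem_Ico.mpr ⟨hx1, by omega⟩
            obtain ⟨p, hp, rfl⟩ := Finset.mem_image.mp hx3
            exact Finset.mem_image.mpr ⟨p, Finset.mem_filter.mpr ⟨hp, hx2⟩, rfl⟩
        have := Finset.card_image_of_injOn
          (fun (p : ℕ × ℕ) (hp : p ∈ B1) q hq h =>
            hfstinj p (Finset.mem_filter.mp hp).1 q (Finset.mem_filter.mp hq).1 h)
        rw [himg, Nat.card_Ico] at this
        omega
      have hB2card : B2.card = k * b + k - (r.2 + 1) := by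
        have himg : B2.image Prod.snd = Finset.Ico (r.2 + 1) (k * b + k) := by
          ext x
          constructor
          · intro hx
            obtain ⟨p, hp, rfl⟩ := Finset.mem_image.mp hx
            obtain ⟨hpA, hplt⟩ := Finset.mem_filter.mp hp
            obtain ⟨-, hx1, hx2⟩ := hmemb p hpA
            exact Finset.mem_Ico.mpr ⟨by omega, hx2⟩
          · intro hx
            obtain ⟨hx1, hx2⟩ := Finset.mem_Ico.mp hx
            have hx3 : x ∈ A.image Prod.snd := by
              rw [hsndimg]
              exact Finset.mem_Ico.mpr ⟨by omega, hx2⟩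
            obtain ⟨p, hp, rfl⟩ := Finset.mem_image.mp hx3
            exact Finset.mem_image.mpr ⟨p, Finset.mem_filter.mpr ⟨hp, by omega⟩, rfl⟩
        have := Finset.card_image_of_injOn
          (fun (p : ℕ × ℕ) (hp : p ∈ B2) q hq h =>
            hsndinj p (Finset.mem_filter.mp hp).1 q (Finset.mem_filter.mp hq).1 h)
        rw [himg, Nat.card_Ico] at this
        omega
      have hsumeq : r.1 + r.2 = k * a + k * b + (k - 1) := by
        rw [hB12] at hB1card
        omega
      refine Finset.mem_biUnion.mpr ⟨(a, b), hab, Finset.mem_image.mpr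
        ⟨r.1 - k * a, Finset.mem_range.mpr (by omega), ?_⟩⟩
      have hc1 : k * a + (r.1 - k * a) = r.1 := by omega
      have hc2 : k * b + (k - 1 - (r.1 - k * a)) = r.2 := by omega
      simp only
      rw [Prod.ext_iff]
      exact ⟨hc1, hc2⟩
    have hpeq : S'.pairs = Sk.pairs := by
      rw [hpairs]
      exact Finset.eq_of_subset_of_card_le hsub (by rw [hcardStutter, hcardS'])
    exact mySecStr_ext (by rw [hS'len, hlen, hSlen]) hpeq
  · push_neg at hall
    obtain ⟨c00, hc00⟩ := hall
    rw [hSkenergy, hsum]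
    have hbound : ∀ c0 ∈ (Finset.univ : Finset (Fin k)),
        energy E w S + (if c0 = c00 then Δ else 0) ≤ energy E w (T c0) := by
      intro c0 _
      by_cases h : c0 = c00
      · rw [if_pos h, h]
        exact hSmin (T c00) (hTcompat c00) hc00
      · rw [if_neg h, add_zero]
        exact hmin c0
    have hs := Finset.sum_le_sum hbound
    rw [Finset.sum_add_distrib, Finset.sum_const, Finset.card_univ, Fintype.card_fin,
      Finset.sum_ite_eq' Finset.univ c00 (fun _ => Δ), if_pos (Finset.mem_univ c00),
      nsmul_eq_mul] at hs
    exact hs
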